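/- Let D₁ and D₂ be random variables, each taking values in the interval [0, d*] almost surely, with error CDFs F₁ and F₂. Suppose F₁(d) ≥ F₂(d) for every d ∈ [0, d*], and in addition there exist d₁ < d₂ in [0, d*] such that F₁(d) > F₂(d) for all d ∈ [d₁, d₂] (strict stochastic dominance). Then for every strictly increasing function g : [0, d*] → ℝ≥0 one has E[g(D₁)] < E[g(D₂)]. -/

import Mathlib

open MeasureTheory Set

/-- Theorem 2 (second part): if algorithm 1 *strictly* stochastically dominates
algorithm 2 (its error CDF dominates pointwise on `[0, d*]` and is strictly
larger on some subinterval `[d₁, d₂]` with `d₁ < d₂`), then the expected cost of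
algorithm 1 is strictly smaller than that of algorithm 2, for every strictly
increasing nonnegative distance-based cost function `g`. -/
theorem strict_stochastic_dominance_expected_cost
    {Ω : Type*} [MeasureSpace Ω] [IsProbabilityMeasure (volume : Measure Ω)]
    (dstar : ℝ) (hdstar : 0 < dstar)
    (D₁ D₂ : Ω → ℝ) (hD₁ : Measurable D₁) (hD₂ : Measurable D₂)
    (hD₁s : ∀ᵐ ω, D₁ ω ∈ Icc 0 dstar) (hD₂s : ∀ᵐ ω, D₂ ω ∈ Icc 0 dstar)
    (hdom : ∀ d ∈ Icc (0:ℝ) dstar,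
      (volume {ω | D₂ ω ≤ d}).toReal ≤ (volume {ω | D₁ ω ≤ d}).toReal)
    (hstrict : ∃ d₁ ∈ Icc (0:ℝ) dstar, ∃ d₂ ∈ Icc (0:ℝ) dstar, d₁ < d₂ ∧
      ∀ d ∈ Icc d₁ d₂,
        (volume {ω | D₂ ω ≤ d}).toReal < (volume {ω | D₁ ω ≤ d}).toReal)
    (g : ℝ → ℝ) (hg : StrictMonoOn g (Icc 0 dstar))
    (hg0 : ∀ x ∈ Icc (0:ℝ) dstar, 0 ≤ g x) :
    (∫ ω, g (D₁ ω)) < ∫ ω, g (D₂ ω) := by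
  classical
  -- the truncation and the globally monotone modification `G` of `g`
  set proj : ℝ → ℝ := fun x => max 0 (min x dstar) with hproj_def
  have hproj_mem : ∀ x, proj x ∈ Icc 0 dstar := by
    intro x
    constructor
    · exact le_max_left _ _
    · exact max_le hdstar.le (min_le_right _ _)
  have hproj_mono : Monotone proj := fun x y hxy =>
    max_le_max le_rfl (min_le_min hxy le_rfl)
  have hproj_id : ∀ x ∈ Icc (0:ℝ) dstar, proj x = x := by
    intro x hx
    simp only [hproj_def]
    rw [min_eq_left hx.2, max_eq_right hx.1]
  set G : ℝ → ℝ := fun x => g (proj x) with hG_def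
  have hgmono := hg.monotoneOn
  have hGmono : Monotone G := fun x y hxy =>
    hgmono (hproj_mem x) (hproj_mem y) (hproj_mono hxy)
  have hGeq : ∀ x ∈ Icc (0:ℝ) dstar, G x = g x := by
    intro x hx; simp only [hG_def, hproj_id x hx]
  have hGmeas : Measurable G := hGmono.measurable
  have hG0 : ∀ x, 0 ≤ G x := fun x => hg0 _ (hproj_mem x)
  have hGlow : ∀ x, g 0 ≤ G x := fun x =>
    hgmono (left_mem_Icc.2 hdstar.le) (hproj_mem x) (hproj_mem x).1
  have hGtop : ∀ x, G x ≤ g dstar := fun x =>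
    hgmono (hproj_mem x) (right_mem_Icc.2 hdstar.le) (hproj_mem x).2
  -- domination of CDFs in ℝ≥0∞
  have hdom' : ∀ d ∈ Icc (0:ℝ) dstar,
      volume {ω | D₂ ω ≤ d} ≤ volume {ω | D₁ ω ≤ d} := by
    intro d hd
    have := hdom d hd
    exact (ENNReal.toReal_le_toReal (measure_ne_top _ _) (measure_ne_top _ _)).1 this
  -- domination of the "strict" CDFs
  have hlt : ∀ c ∈ Icc (0:ℝ) dstar,
      volume {ω | D₂ ω < c} ≤ volume {ω | D₁ ω < c} := by
    intro c hc
    rcases eq_or_lt_of_le hc.1 with h0 | h0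
    · -- c = 0 : the left set is null
      have hnull : {ω | D₂ ω < c} ≤ᵐ[volume] (∅ : Set Ω) := by
        filter_upwards [hD₂s] with ω hω hlt0
        exact absurd (lt_of_lt_of_le hlt0 (h0 ▸ hω.1 : c ≤ D₂ ω)) (lt_irrefl _)
      calc volume {ω | D₂ ω < c} ≤ volume (∅ : Set Ω) := measure_mono_ae hnull
        _ = 0 := measure_empty
        _ ≤ _ := zero_le
    · -- c > 0 : approximate from below
      set t : ℕ → ℝ := fun n => c - c / (n + 1) with ht_def
      have htmem : ∀ n, t n ∈ Icc (0:ℝ) dstar := by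
        intro n
        constructor
        · have h1 : c / (n + 1) ≤ c / 1 := by
            apply div_le_div_of_nonneg_left h0.le one_pos
            exact_mod_cast Nat.le_add_left 1 n
          simp only [ht_def]; rw [div_one] at h1; linarith
        · have : c / (n+1) > 0 := div_pos h0 (by positivity)
          simp only [ht_def]; nlinarith [hc.2]
      have htlt : ∀ n, t n < c := by
        intro n
        have : c / (n+1) > 0 := div_pos h0 (by positivity)
        simp only [ht_def]; linarith
      have htm : Monotone t := by
        intro n m hnm
        simp only [ht_def]
        have : c / (m + 1) ≤ c / (n + 1) := by
          apply div_le_div_of_nonneg_left h0.le (by positivity)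
          exact_mod_cast Nat.add_le_add_right hnm 1
        linarith
      have hUnion : ∀ D : Ω → ℝ, {ω | D ω < c} = ⋃ n, {ω | D ω ≤ t n} := by
        intro D
        ext ω
        simp only [mem_setOf_eq, mem_iUnion]
        constructor
        · intro h
          obtain ⟨n, hn⟩ := exists_nat_one_div_lt
            (show (0:ℝ) < (c - D ω) / c from div_pos (by linarith) h0)
          refine ⟨n, ?_⟩
          have h2 : c * (1 / ((n:ℝ) + 1)) < c * ((c - D ω) / c) :=
            mul_lt_mul_of_pos_left hn h0
          rw [mul_one_div, mul_div_cancel₀ _ h0.ne'] at h2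
          simp only [ht_def]; linarith
        · intro ⟨n, hn⟩
          exact lt_of_le_of_lt hn (htlt n)
      have hm1 : Monotone (fun n => {ω | D₁ ω ≤ t n}) := by
        intro n m hnm ω hω
        exact le_trans hω (htm hnm)
      have hm2 : Monotone (fun n => {ω | D₂ ω ≤ t n}) := by
        intro n m hnm ω hω
        exact le_trans hω (htm hnm)
      rw [hUnion D₂, hUnion D₁, hm2.measure_iUnion, hm1.measure_iUnion]
      exact iSup_mono fun n => hdom' (t n) (htmem n)
  -- pointwise domination of the modified CDFs
  have claimC : ∀ s : ℝ, volume {ω | G (D₂ ω) ≤ s} ≤ volume {ω | G (D₁ ω) ≤ s} := by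
    intro s
    by_cases hs1 : g dstar ≤ s
    · have h1 : {ω | G (D₁ ω) ≤ s} = univ :=
        eq_univ_of_forall fun ω => le_trans (hGtop _) hs1
      rw [h1]
      exact measure_mono (subset_univ _)
    by_cases hs0 : s < g 0
    · have h2 : {ω | G (D₂ ω) ≤ s} = ∅ := by
        ext ω; simp only [mem_setOf_eq, mem_empty_iff_false, iff_false, not_le]
        exact lt_of_lt_of_le hs0 (hGlow _)
      rw [h2, measure_empty]; exact zero_le
    push_neg at hs0
    set B : Set ℝ := {d | d ∈ Icc (0:ℝ) dstar ∧ g d ≤ s} with hB_def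
    have hB0 : (0:ℝ) ∈ B := ⟨left_mem_Icc.2 hdstar.le, hs0⟩
    have hBne : B.Nonempty := ⟨0, hB0⟩
    have hBbdd : BddAbove B := ⟨dstar, fun b hb => hb.1.2⟩
    set c := sSup B with hc_def
    have hc_mem : c ∈ Icc (0:ℝ) dstar :=
      ⟨le_csSup hBbdd hB0, csSup_le hBne fun b hb => hb.1.2⟩
    have hBdown : ∀ d ∈ Icc (0:ℝ) dstar, ∀ b ∈ B, d ≤ b → d ∈ B := by
      intro d hd b hb hdb
      exact ⟨hd, le_trans (hgmono hd hb.1 hdb) hb.2⟩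
    by_cases hgc : g c ≤ s
    · -- closed case
      have sub2 : {ω | G (D₂ ω) ≤ s} ≤ᵐ[volume] {ω | D₂ ω ≤ c} := by
        filter_upwards [hD₂s] with ω hω h
        have hGD : G (D₂ ω) ≤ s := h
        have hgω : g (D₂ ω) ≤ s := by rwa [hGeq _ hω] at hGD
        exact le_csSup hBbdd ⟨hω, hgω⟩
      have sub1 : {ω | D₁ ω ≤ c} ≤ᵐ[volume] {ω | G (D₁ ω) ≤ s} := by
        filter_upwards [hD₁s] with ω hω h
        have hD : D₁ ω ≤ c := h
        show G (D₁ ω) ≤ s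
        rw [hGeq _ hω]
        exact le_trans (hgmono hω hc_mem hD) hgc
      calc volume {ω | G (D₂ ω) ≤ s} ≤ volume {ω | D₂ ω ≤ c} := measure_mono_ae sub2
        _ ≤ volume {ω | D₁ ω ≤ c} := hdom' c hc_mem
        _ ≤ volume {ω | G (D₁ ω) ≤ s} := measure_mono_ae sub1
    · -- open case
      push_neg at hgc
      have sub2 : {ω | G (D₂ ω) ≤ s} ≤ᵐ[volume] {ω | D₂ ω < c} := by
        filter_upwards [hD₂s] with ω hω h
        have hGD : G (D₂ ω) ≤ s := h
        have hgω : g (D₂ ω) ≤ s := by rwa [hGeq _ hω] at hGD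
        have hle : D₂ ω ≤ c := le_csSup hBbdd ⟨hω, hgω⟩
        show D₂ ω < c
        rcases eq_or_lt_of_le hle with heq | hlt'
        · exact absurd (heq ▸ hgω) (not_le.2 hgc)
        · exact hlt'
      have sub1 : {ω | D₁ ω < c} ≤ᵐ[volume] {ω | G (D₁ ω) ≤ s} := by
        filter_upwards [hD₁s] with ω hω h
        have hD : D₁ ω < c := h
        obtain ⟨b, hb, hlt'⟩ := exists_lt_of_lt_csSup hBne hD
        show G (D₁ ω) ≤ s
        rw [hGeq _ hω]
        exact le_trans (hgmono hω hb.1 hlt'.le) hb.2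
      calc volume {ω | G (D₂ ω) ≤ s} ≤ volume {ω | D₂ ω < c} := measure_mono_ae sub2
        _ ≤ volume {ω | D₁ ω < c} := hlt c hc_mem
        _ ≤ volume {ω | G (D₁ ω) ≤ s} := measure_mono_ae sub1
  -- strictness data
  obtain ⟨d₁, hd₁, d₂, hd₂, h12, hstr⟩ := hstrict
  set c' : ℝ := (d₁ + d₂) / 2 with hc'_def
  have hc'1 : d₁ < c' := by simp only [hc'_def]; linarith
  have hc'2 : c' < d₂ := by simp only [hc'_def]; linarith
  have hc'mem : c' ∈ Icc (0:ℝ) dstar := ⟨le_trans hd₁.1 hc'1.le, le_trans hc'2.le hd₂.2⟩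
  have hεpos : (volume {ω | D₂ ω ≤ c'}).toReal < (volume {ω | D₁ ω ≤ c'}).toReal :=
    hstr c' ⟨hc'1.le, hc'2.le⟩
  -- right-continuity of the CDF of D₂ at c'
  set u : ℕ → ℝ := fun n => c' + (d₂ - c') / (n + 1) with hu_def
  have humono : Antitone (fun n => {ω | D₂ ω ≤ u n}) := by
    intro n m hnm ω hω
    have hω' : D₂ ω ≤ u m := hω
    show D₂ ω ≤ u n
    refine le_trans hω' ?_
    simp only [hu_def]
    have : (d₂ - c') / (m + 1) ≤ (d₂ - c') / (n + 1) := by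
      apply div_le_div_of_nonneg_left (by linarith) (by positivity)
      exact_mod_cast Nat.add_le_add_right hnm 1
    linarith
  have hu_tendsto : Filter.Tendsto u Filter.atTop (nhds c') := by
    have h1 := tendsto_one_div_add_atTop_nhds_zero_nat.const_mul (d₂ - c')
    rw [mul_zero] at h1
    have h2 := h1.const_add c'
    rw [add_zero] at h2
    have heq : u = fun n : ℕ => c' + (d₂ - c') * (1 / ((n:ℕ) + 1)) := by
      funext n
      simp only [hu_def, mul_one_div]
    rw [heq]
    exact h2
  have hInter : (⋂ n, {ω | D₂ ω ≤ u n}) = {ω | D₂ ω ≤ c'} := by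
    ext ω
    simp only [mem_iInter, mem_setOf_eq]
    constructor
    · intro h
      exact ge_of_tendsto hu_tendsto (Filter.Eventually.of_forall h)
    · intro h n
      have : c' ≤ u n := by
        simp only [hu_def]
        have : (0:ℝ) < (d₂ - c') / (n + 1) := div_pos (by linarith) (by positivity)
        linarith
      linarith
  have hmeas_tendsto : Filter.Tendsto (fun n => volume {ω | D₂ ω ≤ u n})
      Filter.atTop (nhds (volume {ω | D₂ ω ≤ c'})) := by
    have := tendsto_measure_iInter_atTop (μ := volume)
      (s := fun n => {ω | D₂ ω ≤ u n})
      (fun n => ((measurableSet_le hD₂ measurable_const)).nullMeasurableSet)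
      humono ⟨0, measure_ne_top volume _⟩
    rwa [hInter] at this
  have hmeas_tendsto' : Filter.Tendsto (fun n => (volume {ω | D₂ ω ≤ u n}).toReal)
      Filter.atTop (nhds ((volume {ω | D₂ ω ≤ c'}).toReal)) :=
    (ENNReal.tendsto_toReal (measure_ne_top _ _)).comp hmeas_tendsto
  obtain ⟨N, hN⟩ := (hmeas_tendsto'.eventually_lt_const hεpos).exists
  set c : ℝ := u N with hcN_def
  have hcc' : c' < c := by
    simp only [hcN_def, hu_def]
    have : (0:ℝ) < (d₂ - c') / (N + 1) := div_pos (by linarith) (by positivity)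
    linarith
  have hc_le_d₂ : c ≤ d₂ := by
    simp only [hcN_def, hu_def]
    have h1 : (d₂ - c') / (N + 1) ≤ (d₂ - c') / 1 := by
      apply div_le_div_of_nonneg_left (by linarith) one_pos
      exact_mod_cast Nat.le_add_left 1 N
    rw [div_one] at h1; linarith
  have hcmem : c ∈ Icc (0:ℝ) dstar := ⟨le_trans hc'mem.1 hcc'.le, le_trans hc_le_d₂ hd₂.2⟩
  set δ : ℝ := (volume {ω | D₁ ω ≤ c'}).toReal - (volume {ω | D₂ ω ≤ c}).toReal with hδ_def
  have hδpos : 0 < δ := by simp only [hδ_def]; linarith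
  set su : ℝ := g c' with hsu_def
  set sv : ℝ := g c with hsv_def
  have hsupos : 0 < su := lt_of_le_of_lt (hg0 d₁ hd₁) (hg hd₁ hc'mem hc'1)
  have hsuv : su < sv := hg hc'mem hcmem hcc'
  -- uniform gap on [su, sv)
  have key : ∀ s ∈ Ico su sv,
      volume {ω | G (D₂ ω) ≤ s} + ENNReal.ofReal δ ≤ volume {ω | G (D₁ ω) ≤ s} := by
    intro s hs
    have sub2 : {ω | G (D₂ ω) ≤ s} ≤ᵐ[volume] {ω | D₂ ω ≤ c} := by
      filter_upwards [hD₂s] with ω hω h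
      have hGD : G (D₂ ω) ≤ s := h
      have hgω : g (D₂ ω) ≤ s := by rwa [hGeq _ hω] at hGD
      show D₂ ω ≤ c
      by_contra hcon
      push_neg at hcon
      have hlt1 : g c < g (D₂ ω) := hg hcmem hω hcon
      have hlt2 : sv < g (D₂ ω) := hlt1
      linarith [hs.2]
    have sub1 : {ω | D₁ ω ≤ c'} ≤ᵐ[volume] {ω | G (D₁ ω) ≤ s} := by
      filter_upwards [hD₁s] with ω hω h
      have hD : D₁ ω ≤ c' := h
      show G (D₁ ω) ≤ s
      rw [hGeq _ hω]
      exact le_trans (hgmono hω hc'mem hD) hs.1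
    have hmid : volume {ω | D₂ ω ≤ c} + ENNReal.ofReal δ ≤ volume {ω | D₁ ω ≤ c'} := by
      rw [← ENNReal.ofReal_toReal (measure_ne_top volume {ω | D₂ ω ≤ c}),
        ← ENNReal.ofReal_add ENNReal.toReal_nonneg hδpos.le,
        ← ENNReal.ofReal_toReal (measure_ne_top volume {ω | D₁ ω ≤ c'})]
      apply ENNReal.ofReal_le_ofReal
      simp only [hδ_def]; linarith
    calc volume {ω | G (D₂ ω) ≤ s} + ENNReal.ofReal δ
        ≤ volume {ω | D₂ ω ≤ c} + ENNReal.ofReal δ := by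
          exact add_le_add (measure_mono_ae sub2) le_rfl
      _ ≤ volume {ω | D₁ ω ≤ c'} := hmid
      _ ≤ volume {ω | G (D₁ ω) ≤ s} := measure_mono_ae sub1
  -- translate to tail probabilities
  have hcompl : ∀ (D : Ω → ℝ) (hD : Measurable D) (s : ℝ),
      volume {ω | s < G (D ω)} = 1 - volume {ω | G (D ω) ≤ s} := by
    intro D hD s
    have hset : {ω | s < G (D ω)} = {ω | G (D ω) ≤ s}ᶜ := by
      ext ω; simp [not_le]
    rw [hset]
    exact prob_compl_eq_one_sub (measurableSet_le (hGmeas.comp hD) measurable_const)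
  have ptwise : ∀ s : ℝ, volume {ω | s < G (D₁ ω)} ≤ volume {ω | s < G (D₂ ω)} := by
    intro s
    rw [hcompl D₁ hD₁ s, hcompl D₂ hD₂ s]
    exact tsub_le_tsub_left (claimC s) 1
  have ptstrict : ∀ s ∈ Ico su sv,
      volume {ω | s < G (D₁ ω)} + ENNReal.ofReal δ ≤ volume {ω | s < G (D₂ ω)} := by
    intro s hs
    rw [hcompl D₁ hD₁ s, hcompl D₂ hD₂ s]
    have h := key s hs
    have hA1le : volume {ω | G (D₁ ω) ≤ s} ≤ 1 := prob_le_one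
    have hsum_le : volume {ω | G (D₂ ω) ≤ s} + ENNReal.ofReal δ ≤ 1 := le_trans h hA1le
    have step1 : 1 - volume {ω | G (D₁ ω) ≤ s}
        ≤ 1 - (volume {ω | G (D₂ ω) ≤ s} + ENNReal.ofReal δ) := tsub_le_tsub_left h 1
    have step2 : 1 - (volume {ω | G (D₂ ω) ≤ s} + ENNReal.ofReal δ)
        = 1 - volume {ω | G (D₂ ω) ≤ s} - ENNReal.ofReal δ := by
      rw [← tsub_add_eq_tsub_tsub]
    have step3 : ENNReal.ofReal δ ≤ 1 - volume {ω | G (D₂ ω) ≤ s} :=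
      ENNReal.le_sub_of_add_le_left (measure_ne_top _ _) hsum_le
    calc 1 - volume {ω | G (D₁ ω) ≤ s} + ENNReal.ofReal δ
        ≤ (1 - volume {ω | G (D₂ ω) ≤ s} - ENNReal.ofReal δ) + ENNReal.ofReal δ := by
          rw [← step2]; exact add_le_add step1 le_rfl
      _ = 1 - volume {ω | G (D₂ ω) ≤ s} := tsub_add_cancel_of_le step3
  -- layer cake
  have LC : ∀ (D : Ω → ℝ) (hD : Measurable D),
      ∫⁻ ω, ENNReal.ofReal (G (D ω)) = ∫⁻ s in Ioi (0:ℝ), volume {ω | s < G (D ω)} := by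
    intro D hD
    exact lintegral_eq_lintegral_meas_lt volume
      (Filter.Eventually.of_forall fun ω => hG0 _) (hGmeas.comp hD).aemeasurable
  -- finiteness
  have hbound : ∀ (D : Ω → ℝ), ∀ s : ℝ, volume {ω | s < G (D ω)}
      ≤ (Iic (g dstar)).indicator (fun _ => (1:ENNReal)) s := by
    intro D s
    by_cases hs : s ≤ g dstar
    · rw [indicator_of_mem (mem_Iic.2 hs)]
      exact prob_le_one
    · push_neg at hs
      rw [indicator_of_notMem (by simpa using hs.not_ge)]
      have : {ω | s < G (D ω)} = ∅ := by
        ext ω; simp only [mem_setOf_eq, mem_empty_iff_false, iff_false, not_lt]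
        exact le_trans (hGtop _) hs.le
      simp [this]
  have hfin : ∀ (D : Ω → ℝ), (∫⁻ s in Ioi (0:ℝ), volume {ω | s < G (D ω)}) ≠ ⊤ := by
    intro D
    have h1 : (∫⁻ s in Ioi (0:ℝ), volume {ω | s < G (D ω)})
        ≤ ∫⁻ s in Ioi (0:ℝ), (Iic (g dstar)).indicator (fun _ => (1:ENNReal)) s :=
      lintegral_mono fun s => hbound D s
    have h2 : (∫⁻ s in Ioi (0:ℝ), (Iic (g dstar)).indicator (fun _ => (1:ENNReal)) s)
        = volume (Iic (g dstar) ∩ Ioi 0) := by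
      rw [lintegral_indicator measurableSet_Iic, setLIntegral_one,
        Measure.restrict_apply measurableSet_Iic]
    have h3 : volume (Iic (g dstar) ∩ Ioi (0:ℝ)) ≠ ⊤ := by
      have : Iic (g dstar) ∩ Ioi (0:ℝ) = Ioc 0 (g dstar) := by
        ext x; simp [mem_Ioc, and_comm]
      rw [this, Real.volume_Ioc]
      exact ENNReal.ofReal_ne_top
    exact ne_top_of_le_ne_top (h2 ▸ h3) h1
  -- the main strict lintegral inequality
  have main : (∫⁻ s in Ioi (0:ℝ), volume {ω | s < G (D₁ ω)})
      < ∫⁻ s in Ioi (0:ℝ), volume {ω | s < G (D₂ ω)} := by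
    have hadd : (∫⁻ s in Ioi (0:ℝ),
        (volume {ω | s < G (D₁ ω)} + (Ico su sv).indicator (fun _ => ENNReal.ofReal δ) s))
        ≤ ∫⁻ s in Ioi (0:ℝ), volume {ω | s < G (D₂ ω)} := by
      apply lintegral_mono
      intro s
      simp only [indicator_apply]
      by_cases hs : s ∈ Ico su sv
      · rw [if_pos hs]
        exact ptstrict s hs
      · rw [if_neg hs, add_zero]
        exact ptwise s
    have hsplit : (∫⁻ s in Ioi (0:ℝ),
        (volume {ω | s < G (D₁ ω)} + (Ico su sv).indicator (fun _ => ENNReal.ofReal δ) s))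
        = (∫⁻ s in Ioi (0:ℝ), volume {ω | s < G (D₁ ω)})
          + ENNReal.ofReal δ * ENNReal.ofReal (sv - su) := by
      rw [lintegral_add_right _ (measurable_const.indicator measurableSet_Ico)]
      congr 1
      rw [lintegral_indicator measurableSet_Ico, setLIntegral_const,
        Measure.restrict_apply measurableSet_Ico]
      have : Ico su sv ∩ Ioi (0:ℝ) = Ico su sv := by
        apply inter_eq_left.2
        intro x hx
        exact lt_of_lt_of_le hsupos hx.1
      rw [this, Real.volume_Ico]
    have hposadd : ENNReal.ofReal δ * ENNReal.ofReal (sv - su) ≠ 0 := by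
      apply mul_ne_zero
      · exact (ENNReal.ofReal_pos.2 hδpos).ne'
      · exact (ENNReal.ofReal_pos.2 (by linarith)).ne'
    calc (∫⁻ s in Ioi (0:ℝ), volume {ω | s < G (D₁ ω)})
        < (∫⁻ s in Ioi (0:ℝ), volume {ω | s < G (D₁ ω)})
          + ENNReal.ofReal δ * ENNReal.ofReal (sv - su) :=
          ENNReal.lt_add_right (hfin D₁) hposadd
      _ = _ := hsplit.symm
      _ ≤ _ := hadd
  -- back to Bochner integrals
  have hae₁ : (fun ω => g (D₁ ω)) =ᵐ[volume] fun ω => G (D₁ ω) := by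
    filter_upwards [hD₁s] with ω hω
    rw [hGeq _ hω]
  have hae₂ : (fun ω => g (D₂ ω)) =ᵐ[volume] fun ω => G (D₂ ω) := by
    filter_upwards [hD₂s] with ω hω
    rw [hGeq _ hω]
  have e₁ : (∫ ω, g (D₁ ω)) = (∫⁻ ω, ENNReal.ofReal (G (D₁ ω))).toReal := by
    rw [integral_congr_ae hae₁]
    exact integral_eq_lintegral_of_nonneg_ae (Filter.Eventually.of_forall fun ω => hG0 _)
      (hGmeas.comp hD₁).aestronglyMeasurable
  have e₂ : (∫ ω, g (D₂ ω)) = (∫⁻ ω, ENNReal.ofReal (G (D₂ ω))).toReal := by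
    rw [integral_congr_ae hae₂]
    exact integral_eq_lintegral_of_nonneg_ae (Filter.Eventually.of_forall fun ω => hG0 _)
      (hGmeas.comp hD₂).aestronglyMeasurable
  rw [e₁, e₂, LC D₁ hD₁, LC D₂ hD₂]
  exact (ENNReal.toReal_lt_toReal (hfin D₁) (hfin D₂)).2 main
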